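/- Let α ∈ (0,1), c, τ > 0, η_n = c n^{-α}, and let (s_n) be nonnegative reals with s_{n+1} ≤ (1 - η_n)s_n + τ η_n² for all n ≥ 1. Let n₀ > 1 be the smallest integer with η_{n₀} ≤ 1 and set t = 1 - 2^{α-1} ≥ 0. Then for every n ≥ 2n₀, s_{n+1} ≤ (τ c² φ_{1-2α}(n) + s_{n₀} exp(c n₀^{1-α}/(1-α))) · exp(-c t (n+1)^{1-α}/(1-α)) + τ 2^α c / (n-2)^α, where φ_γ is as in Chung's lemma. -/

import Mathlib

noncomputable def chungPhi (c : ℝ) (x : ℝ) : ℝ :=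
  if c = 0 then Real.log x else (x ^ c - 1) / c

lemma chungPhi_hasDerivAt (γ : ℝ) {x : ℝ} (hx : 0 < x) :
    HasDerivAt (chungPhi γ) (x ^ (γ - 1)) x := by
  unfold chungPhi
  by_cases h : γ = 0
  · simp only [h, if_pos]
    simpa [Real.rpow_neg_one, Real.rpow_sub hx, hx.ne'] using Real.hasDerivAt_log hx.ne'
  · simp only [h, if_neg, if_false]
    have := ((Real.hasDerivAt_rpow_const (p := γ) (Or.inl hx.ne')).sub_const 1).div_const γ
    rw [mul_div_cancel_left₀ _ h] at this
    exact this

lemma chungPhi_slope {γ a b : ℝ} (ha : 0 < a) (hab : a < b) :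
    ∃ ξ ∈ Set.Ioo a b, chungPhi γ b - chungPhi γ a = ξ ^ (γ - 1) * (b - a) := by
  have hderiv : ∀ x ∈ Set.Ioo a b, HasDerivAt (chungPhi γ) (x ^ (γ - 1)) x :=
    fun x hx => chungPhi_hasDerivAt γ (ha.trans hx.1)
  have hcont : ContinuousOn (chungPhi γ) (Set.Icc a b) := by
    intro x hx
    exact (chungPhi_hasDerivAt γ (ha.trans_le hx.1)).continuousAt.continuousWithinAt
  obtain ⟨ξ, hξ, heq⟩ := exists_hasDerivAt_eq_slope (chungPhi γ) _ hab hcont hderiv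
  refine ⟨ξ, hξ, ?_⟩
  rw [heq, div_mul_cancel₀]
  exact sub_ne_zero.mpr hab.ne'

lemma chungPhi_mono {γ a b : ℝ} (ha : 0 < a) (hab : a ≤ b) :
    chungPhi γ a ≤ chungPhi γ b := by
  rcases eq_or_lt_of_le hab with h | h
  · rw [h]
  · obtain ⟨ξ, hξ, heq⟩ := chungPhi_slope (γ := γ) ha h
    nlinarith [Real.rpow_pos_of_pos (ha.trans hξ.1) (γ - 1), hξ.1, hξ.2]

lemma chungPhi_one (γ : ℝ) : chungPhi γ 1 = 0 := by
  unfold chungPhi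
  by_cases h : γ = 0 <;> simp [h]

lemma chungPhi_nonneg {γ x : ℝ} (hx : 1 ≤ x) : 0 ≤ chungPhi γ x := by
  have := chungPhi_mono (γ := γ) one_pos hx
  rwa [chungPhi_one] at this

lemma sum_Ico_le_telescope {f g : ℕ → ℝ} {a : ℕ} : ∀ {n : ℕ}, a ≤ n →
    (∀ k, a ≤ k → k < n → f k ≤ g (k + 1) - g k) →
    ∑ k ∈ Finset.Ico a n, f k ≤ g n - g a := by
  intro n han
  induction n, han using Nat.le_induction with
  | base => simp
  | succ n hn ih =>
    intro h
    rw [Finset.sum_Ico_succ_top hn]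
    have h1 := ih (fun k hk hk' => h k hk (hk'.trans (Nat.lt_succ_self n)))
    have h2 := h n hn (Nat.lt_succ_self n)
    linarith

lemma sum_Ico_ge_telescope {f g : ℕ → ℝ} {a : ℕ} : ∀ {n : ℕ}, a ≤ n →
    (∀ k, a ≤ k → k < n → g (k + 1) - g k ≤ f k) →
    g n - g a ≤ ∑ k ∈ Finset.Ico a n, f k := by
  intro n han h
  have := sum_Ico_le_telescope (f := fun k => -f k) (g := fun k => -g k) han
    (fun k hk hk' => by simpa using neg_le_neg (h k hk hk'))
  simp only [Finset.sum_neg_distrib] at this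
  linarith [this]

lemma eta_prod_telescope (η : ℕ → ℝ) {a : ℕ} : ∀ {N : ℕ}, a ≤ N →
    ∑ k ∈ Finset.Ico a N, η k * ∏ j ∈ Finset.Ico (k + 1) N, (1 - η j)
      = 1 - ∏ j ∈ Finset.Ico a N, (1 - η j) := by
  intro N haN
  induction N, haN using Nat.le_induction with
  | base => simp
  | succ N hN ih =>
    rw [Finset.sum_Ico_succ_top hN, Finset.prod_Ico_succ_top hN]
    have hrw : ∀ k ∈ Finset.Ico a N,
        η k * ∏ j ∈ Finset.Ico (k + 1) (N + 1), (1 - η j)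
          = (η k * ∏ j ∈ Finset.Ico (k + 1) N, (1 - η j)) * (1 - η N) := by
      intro k hk
      rw [Finset.prod_Ico_succ_top (Finset.mem_Ico.mp hk).2, mul_assoc]
    rw [Finset.sum_congr rfl hrw, ← Finset.sum_mul, ih]
    simp only [Finset.Ico_self, Finset.prod_empty, mul_one]
    ring

set_option maxHeartbeats 1000000 in
theorem chung_lemma_alpha_lt_one (α c τ : ℝ) (hα : 0 < α) (hα1 : α < 1)
    (hc : 0 < c) (hτ : 0 < τ) (η s : ℕ → ℝ)
    (hη : ∀ n : ℕ, 1 ≤ n → η n = c * (n : ℝ) ^ (-α))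
    (hs0 : ∀ n, 0 ≤ s n)
    (hrec : ∀ n : ℕ, 1 ≤ n → s (n + 1) ≤ (1 - η n) * s n + τ * η n ^ 2)
    (n₀ : ℕ) (hn₀ : 1 < n₀) (hn₀le : η n₀ ≤ 1)
    (hn₀min : ∀ m : ℕ, 1 < m → η m ≤ 1 → n₀ ≤ m)
    (t : ℝ) (ht : t = 1 - (2 : ℝ) ^ (α - 1)) (ht0 : 0 ≤ t) :
    ∀ n : ℕ, 2 * n₀ ≤ n →
      s (n + 1) ≤ (τ * c ^ 2 * chungPhi (1 - 2 * α) (n : ℝ)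
          + s n₀ * Real.exp (c * (n₀ : ℝ) ^ (1 - α) / (1 - α)))
          * Real.exp (-c * t * ((n : ℝ) + 1) ^ (1 - α) / (1 - α))
        + τ * 2 ^ α * c / ((n : ℝ) - 2) ^ α := by
  have hβ : (0:ℝ) < 1 - α := by linarith
  set β := 1 - α with hβdef
  set γ := 1 - 2 * α with hγdef
  -- η is positive and antitone on [1, ∞)
  have hηpos : ∀ k : ℕ, 1 ≤ k → 0 < η k := by
    intro k hk
    rw [hη k hk]
    exact mul_pos hc (Real.rpow_pos_of_pos (by exact_mod_cast hk) _)
  have hηmono : ∀ j k : ℕ, 1 ≤ j → j ≤ k → η k ≤ η j := by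
    intro j k hj hjk
    rw [hη j hj, hη k (hj.trans hjk)]
    apply mul_le_mul_of_nonneg_left _ hc.le
    exact Real.rpow_le_rpow_of_nonpos (by exact_mod_cast hj) (by exact_mod_cast hjk)
      (by linarith)
  have hη1 : ∀ k : ℕ, n₀ ≤ k → η k ≤ 1 :=
    fun k hk => (hηmono n₀ k (by omega) hk).trans hn₀le
  have hfac : ∀ k : ℕ, n₀ ≤ k → 0 ≤ 1 - η k := fun k hk => by linarith [hη1 k hk]
  -- unrolled recursion
  have unroll : ∀ n : ℕ, n₀ ≤ n →
      s (n + 1) ≤ (∏ j ∈ Finset.Ico n₀ (n + 1), (1 - η j)) * s n₀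
        + τ * ∑ k ∈ Finset.Ico n₀ (n + 1), η k ^ 2 *
            ∏ j ∈ Finset.Ico (k + 1) (n + 1), (1 - η j) := by
    intro n hn
    induction n, hn using Nat.le_induction with
    | base =>
      rw [Nat.Ico_succ_singleton]
      simpa using hrec n₀ (by omega)
    | succ n hn ih =>
      have h1 := hrec (n + 1) (by omega)
      have h0 : 0 ≤ 1 - η (n + 1) := hfac (n + 1) (by omega)
      have h2 : (1 - η (n + 1)) * s (n + 1) ≤ (1 - η (n + 1)) *
          ((∏ j ∈ Finset.Ico n₀ (n + 1), (1 - η j)) * s n₀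
            + τ * ∑ k ∈ Finset.Ico n₀ (n + 1), η k ^ 2 *
                ∏ j ∈ Finset.Ico (k + 1) (n + 1), (1 - η j)) :=
        mul_le_mul_of_nonneg_left ih h0
      have hprodrw : (∏ j ∈ Finset.Ico n₀ (n + 1 + 1), (1 - η j))
          = (∏ j ∈ Finset.Ico n₀ (n + 1), (1 - η j)) * (1 - η (n + 1)) :=
        Finset.prod_Ico_succ_top (by omega) (fun j => 1 - η j)
      have hsumrw : (∑ k ∈ Finset.Ico n₀ (n + 1 + 1), η k ^ 2 *
            ∏ j ∈ Finset.Ico (k + 1) (n + 1 + 1), (1 - η j))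
          = (∑ k ∈ Finset.Ico n₀ (n + 1), η k ^ 2 *
              ∏ j ∈ Finset.Ico (k + 1) (n + 1), (1 - η j)) * (1 - η (n + 1))
            + η (n + 1) ^ 2 := by
        rw [Finset.sum_Ico_succ_top (by omega : n₀ ≤ n + 1)]
        have hrw : ∀ k ∈ Finset.Ico n₀ (n + 1),
            η k ^ 2 * ∏ j ∈ Finset.Ico (k + 1) (n + 1 + 1), (1 - η j)
              = (η k ^ 2 * ∏ j ∈ Finset.Ico (k + 1) (n + 1), (1 - η j)) *
                  (1 - η (n + 1)) := by
          intro k hk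
          rw [Finset.prod_Ico_succ_top (Finset.mem_Ico.mp hk).2, mul_assoc]
        rw [Finset.sum_congr rfl hrw, ← Finset.sum_mul]
        simp only [Finset.Ico_self, Finset.prod_empty, mul_one]
      calc s (n + 1 + 1) ≤ (1 - η (n + 1)) * s (n + 1) + τ * η (n + 1) ^ 2 := h1
        _ ≤ (1 - η (n + 1)) *
            ((∏ j ∈ Finset.Ico n₀ (n + 1), (1 - η j)) * s n₀
              + τ * ∑ k ∈ Finset.Ico n₀ (n + 1), η k ^ 2 *
                  ∏ j ∈ Finset.Ico (k + 1) (n + 1), (1 - η j))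
            + τ * η (n + 1) ^ 2 := by linarith
        _ = _ := by rw [hprodrw, hsumrw]; ring
  -- lower bound for partial sums of η
  have hsumlow : ∀ a b : ℕ, 1 ≤ a → a ≤ b →
      c * (chungPhi β (b : ℝ) - chungPhi β (a : ℝ)) ≤ ∑ k ∈ Finset.Ico a b, η k := by
    intro a b ha hab
    have := sum_Ico_ge_telescope (f := η) (g := fun k => c * chungPhi β (k : ℝ)) hab ?_
    · simpa [mul_sub] using this
    · intro k hk _
      have hk1 : (1:ℝ) ≤ (k:ℝ) := by exact_mod_cast ha.trans hk
      have hk0 : (0:ℝ) < (k:ℝ) := by linarith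
      obtain ⟨ξ, hξ, heq⟩ := chungPhi_slope (γ := β) hk0 (by linarith : (k:ℝ) < (k:ℝ) + 1)
      have hξk : ξ ^ (β - 1) ≤ (k : ℝ) ^ (β - 1) :=
        Real.rpow_le_rpow_of_nonpos hk0 hξ.1.le (by rw [hβdef]; linarith)
      have hβ1 : β - 1 = -α := by rw [hβdef]; ring
      rw [hη k (ha.trans hk)]
      push_cast [heq]
      rw [← hβ1]
      nlinarith [hξk]
  -- product bound via exp
  have hprodexp : ∀ a b : ℕ, n₀ ≤ a → a ≤ b →
      (∏ j ∈ Finset.Ico a b, (1 - η j))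
        ≤ Real.exp (-(c * (chungPhi β (b : ℝ) - chungPhi β (a : ℝ)))) := by
    intro a b ha hab
    have h1 : (∏ j ∈ Finset.Ico a b, (1 - η j))
        ≤ ∏ j ∈ Finset.Ico a b, Real.exp (-η j) := by
      apply Finset.prod_le_prod
      · intro j hj
        exact hfac j (ha.trans (Finset.mem_Ico.mp hj).1)
      · intro j _
        have := Real.add_one_le_exp (-η j)
        linarith
    rw [← Real.exp_sum] at h1
    refine h1.trans (Real.exp_le_exp.mpr ?_)
    have := hsumlow a b (by omega) hab
    have hsum : ∑ j ∈ Finset.Ico a b, -η j = -∑ j ∈ Finset.Ico a b, η j := by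
      simp
    rw [hsum]
    linarith
  have hprodnn : ∀ a b : ℕ, n₀ ≤ a → 0 ≤ ∏ j ∈ Finset.Ico a b, (1 - η j) := by
    intro a b ha
    apply Finset.prod_nonneg
    intro j hj
    exact hfac j (ha.trans (Finset.mem_Ico.mp hj).1)
  -- now fix n
  intro n hn
  set m := n / 2 with hmdef
  have hn4 : 4 ≤ n := by omega
  have hmn₀ : n₀ ≤ m := by omega
  have hm2 : 2 * m ≤ n := by omega
  have hm2' : n - 1 ≤ 2 * m := by omega
  have hmn1 : m ≤ n + 1 := by omega
  have hmr : ((n:ℝ) - 1) / 2 ≤ (m:ℝ) := by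
    have h1 : (n:ℝ) ≤ 2 * (m:ℝ) + 1 := by exact_mod_cast (by omega : n ≤ 2 * m + 1)
    linarith
  have hmr2 : (m:ℝ) ≤ ((n:ℝ) + 1) / 2 := by
    have h1 : 2 * (m:ℝ) ≤ (n:ℝ) := by exact_mod_cast hm2
    linarith
  -- the exponential factor
  set E := Real.exp (-c * t * ((n : ℝ) + 1) ^ β / β) with hEdef
  have hEpos : 0 < E := Real.exp_pos _
  have hnp1 : (0:ℝ) < (n:ℝ) + 1 := by positivity
  have hnpow : 0 ≤ c * ((n:ℝ) + 1) ^ β / β :=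
    div_nonneg (mul_nonneg hc.le (Real.rpow_nonneg (by linarith) _)) hβ.le
  have ht1 : t ≤ 1 := by
    have := Real.rpow_pos_of_pos (two_pos : (0:ℝ) < 2) (α - 1)
    rw [ht]; linarith
  -- exp(-c (n+1)^β / β) ≤ E
  have hexpE : Real.exp (-(c * ((n:ℝ) + 1) ^ β / β)) ≤ E := by
    rw [hEdef, Real.exp_le_exp]
    have h2 : c * t * ((n:ℝ) + 1) ^ β / β ≤ c * ((n:ℝ) + 1) ^ β / β := by
      apply div_le_div_of_nonneg_right _ hβ.le
      have hX : (0:ℝ) ≤ ((n:ℝ) + 1) ^ β := Real.rpow_nonneg hnp1.le β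
      nlinarith [mul_nonneg (mul_nonneg hc.le hX) (by linarith : (0:ℝ) ≤ 1 - t)]
    have h3 : -c * t * ((n:ℝ) + 1) ^ β / β = -(c * t * ((n:ℝ) + 1) ^ β / β) := by ring
    rw [h3]
    exact neg_le_neg h2
  -- Bound 1 : the s n₀ term
  have hbound1 : (∏ j ∈ Finset.Ico n₀ (n + 1), (1 - η j)) * s n₀
      ≤ s n₀ * Real.exp (c * (n₀ : ℝ) ^ β / β) * E := by
    have hp := hprodexp n₀ (n + 1) le_rfl (by omega)
    have hphi : chungPhi β ((n:ℝ) + 1) = (((n:ℝ) + 1) ^ β - 1) / β := by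
      unfold chungPhi; rw [if_neg hβ.ne']
    have hphi0 : chungPhi β ((n₀:ℝ)) = ((n₀:ℝ) ^ β - 1) / β := by
      unfold chungPhi; rw [if_neg hβ.ne']
    have hcast : ((n + 1 : ℕ) : ℝ) = (n:ℝ) + 1 := by push_cast; ring
    rw [hcast, hphi, hphi0] at hp
    have heq : -(c * ((((n:ℝ) + 1) ^ β - 1) / β - ((n₀:ℝ) ^ β - 1) / β))
        = c * (n₀ : ℝ) ^ β / β + -(c * ((n:ℝ) + 1) ^ β / β) := by
      field_simp; ring
    rw [heq, Real.exp_add] at hp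
    calc (∏ j ∈ Finset.Ico n₀ (n + 1), (1 - η j)) * s n₀
        ≤ (Real.exp (c * (n₀ : ℝ) ^ β / β) * Real.exp (-(c * ((n:ℝ) + 1) ^ β / β)))
            * s n₀ := mul_le_mul_of_nonneg_right hp (hs0 n₀)
      _ ≤ (Real.exp (c * (n₀ : ℝ) ^ β / β) * E) * s n₀ := by
          apply mul_le_mul_of_nonneg_right _ (hs0 n₀)
          exact mul_le_mul_of_nonneg_left hexpE (Real.exp_pos _).le
      _ = s n₀ * Real.exp (c * (n₀ : ℝ) ^ β / β) * E := by ring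
  -- Bound head
  have hheadterm : ∀ k ∈ Finset.Ico n₀ m,
      η k ^ 2 * ∏ j ∈ Finset.Ico (k + 1) (n + 1), (1 - η j) ≤ η k ^ 2 * E := by
    intro k hk
    obtain ⟨hk1, hk2⟩ := Finset.mem_Ico.mp hk
    apply mul_le_mul_of_nonneg_left _ (sq_nonneg _)
    have hp := hprodexp (k + 1) (n + 1) (by omega) (by omega)
    refine hp.trans ?_
    rw [hEdef, Real.exp_le_exp]
    -- show c * t * (n+1)^β / β ≤ c * (chungPhi β (n+1) - chungPhi β (k+1))
    have hphi : chungPhi β (((n:ℕ) + 1 : ℕ) : ℝ) - chungPhi β (((k:ℕ) + 1 : ℕ) : ℝ)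
        = ((((n:ℝ) + 1) ^ β) - (((k:ℝ) + 1) ^ β)) / β := by
      unfold chungPhi; rw [if_neg hβ.ne', if_neg hβ.ne']
      push_cast; field_simp; ring
    rw [hphi]
    have hk1r : (0:ℝ) < (k:ℝ) + 1 := by positivity
    have hklem : ((k:ℝ) + 1) ^ β ≤ (2:ℝ) ^ (α - 1) * ((n:ℝ) + 1) ^ β := by
      have hkle : (k:ℝ) + 1 ≤ ((n:ℝ) + 1) / 2 := by
        have : (k:ℝ) + 1 ≤ (m:ℝ) := by exact_mod_cast (by omega : k + 1 ≤ m)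
        linarith [hmr2]
      have h1 : ((k:ℝ) + 1) ^ β ≤ (((n:ℝ) + 1) / 2) ^ β :=
        Real.rpow_le_rpow (by linarith) hkle hβ.le
      have h2 : (((n:ℝ) + 1) / 2) ^ β = ((n:ℝ) + 1) ^ β / (2:ℝ) ^ β :=
        Real.div_rpow (by linarith) (by norm_num : (0:ℝ) ≤ 2) β
      have h3 : ((n:ℝ) + 1) ^ β / (2:ℝ) ^ β = (2:ℝ) ^ (α - 1) * ((n:ℝ) + 1) ^ β := by
        rw [div_eq_mul_inv, ← Real.rpow_neg (by norm_num : (0:ℝ) ≤ 2)]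
        rw [hβdef]
        ring_nf
      rw [h2, h3] at h1
      exact h1
    have ht' : t * ((n:ℝ) + 1) ^ β ≤ ((n:ℝ) + 1) ^ β - ((k:ℝ) + 1) ^ β := by
      rw [ht]; nlinarith [hklem]
    have hgoal : c * t * ((n:ℝ) + 1) ^ β / β
        ≤ c * ((((n:ℝ) + 1) ^ β - ((k:ℝ) + 1) ^ β) / β) := by
      rw [← mul_div_assoc]
      apply div_le_div_of_nonneg_right _ hβ.le
      nlinarith [ht']
    have h3 : -c * t * ((n:ℝ) + 1) ^ β / β = -(c * t * ((n:ℝ) + 1) ^ β / β) := by ring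
    rw [h3]
    have h4 : -(c * ((((n:ℝ) + 1) ^ β - ((k:ℝ) + 1) ^ β) / β))
        ≤ -(c * t * ((n:ℝ) + 1) ^ β / β) := neg_le_neg hgoal
    exact h4
  have hheadsum : ∑ k ∈ Finset.Ico n₀ m, η k ^ 2 ≤ c ^ 2 * chungPhi γ (n : ℝ) := by
    have htel := sum_Ico_le_telescope (f := fun k => η k ^ 2)
      (g := fun k => c ^ 2 * chungPhi γ ((k:ℝ) - 1)) hmn₀ ?_
    · refine htel.trans ?_
      have h1 : chungPhi γ ((m:ℝ) - 1) ≤ chungPhi γ (n:ℝ) := by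
        apply chungPhi_mono
        · have : (2:ℝ) ≤ (m:ℝ) := by exact_mod_cast (by omega : 2 ≤ m)
          linarith
        · have : (m:ℝ) ≤ (n:ℝ) := by exact_mod_cast (by omega : m ≤ n)
          linarith
      have h2 : 0 ≤ chungPhi γ ((n₀:ℝ) - 1) := by
        apply chungPhi_nonneg
        have : (2:ℝ) ≤ (n₀:ℝ) := by exact_mod_cast hn₀
        linarith
      nlinarith [mul_le_mul_of_nonneg_left h1 (sq_nonneg c),
        mul_nonneg (sq_nonneg c) h2]
    · intro k hk hk'
      have hk2 : (2:ℝ) ≤ (k:ℝ) := by exact_mod_cast (by omega : 2 ≤ k)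
      have hk0 : (0:ℝ) < (k:ℝ) - 1 := by linarith
      obtain ⟨ξ, hξ, heq⟩ := chungPhi_slope (γ := γ) hk0
        (by linarith : (k:ℝ) - 1 < (k:ℝ))
      have hcast : ((k + 1 : ℕ) : ℝ) - 1 = (k:ℝ) := by push_cast; ring
      rw [hcast]
      have hξk : (k:ℝ) ^ (γ - 1) ≤ ξ ^ (γ - 1) :=
        Real.rpow_le_rpow_of_nonpos (hk0.trans hξ.1) hξ.2.le (by rw [hγdef]; linarith)
      rw [hη k (by omega)]
      have hpow : (c * (k:ℝ) ^ (-α)) ^ 2 = c ^ 2 * (k:ℝ) ^ (γ - 1) := by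
        rw [mul_pow, sq ((k:ℝ) ^ (-α)), ← Real.rpow_add (by linarith : (0:ℝ) < (k:ℝ))]
        congr 1
        rw [hγdef]; ring
      rw [hpow]
      have heq2 : c ^ 2 * chungPhi γ ((k:ℝ)) - c ^ 2 * chungPhi γ ((k:ℝ) - 1)
          = c ^ 2 * ξ ^ (γ - 1) := by
        have h5 : chungPhi γ ((k:ℝ)) - chungPhi γ ((k:ℝ) - 1) = ξ ^ (γ - 1) := by
          rw [heq]; ring
        linear_combination (c ^ 2) * h5
      rw [heq2]
      exact mul_le_mul_of_nonneg_left hξk (sq_nonneg c)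
  -- head bound combined
  have hhead : ∑ k ∈ Finset.Ico n₀ m, η k ^ 2 * ∏ j ∈ Finset.Ico (k + 1) (n + 1), (1 - η j)
      ≤ c ^ 2 * chungPhi γ (n : ℝ) * E := by
    calc ∑ k ∈ Finset.Ico n₀ m, η k ^ 2 * ∏ j ∈ Finset.Ico (k + 1) (n + 1), (1 - η j)
        ≤ ∑ k ∈ Finset.Ico n₀ m, η k ^ 2 * E := Finset.sum_le_sum hheadterm
      _ = (∑ k ∈ Finset.Ico n₀ m, η k ^ 2) * E := by rw [← Finset.sum_mul]
      _ ≤ c ^ 2 * chungPhi γ (n : ℝ) * E :=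
          mul_le_mul_of_nonneg_right hheadsum hEpos.le
  -- tail bound
  have htail : ∑ k ∈ Finset.Ico m (n + 1), η k ^ 2 * ∏ j ∈ Finset.Ico (k + 1) (n + 1), (1 - η j)
      ≤ 2 ^ α * c * ((n:ℝ) - 2) ^ (-α) := by
    have hstep : ∀ k ∈ Finset.Ico m (n + 1),
        η k ^ 2 * ∏ j ∈ Finset.Ico (k + 1) (n + 1), (1 - η j)
          ≤ η m * (η k * ∏ j ∈ Finset.Ico (k + 1) (n + 1), (1 - η j)) := by
      intro k hk
      obtain ⟨hk1, _⟩ := Finset.mem_Ico.mp hk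
      have hpn : 0 ≤ ∏ j ∈ Finset.Ico (k + 1) (n + 1), (1 - η j) :=
        hprodnn (k + 1) (n + 1) (by omega)
      have hke : η k ≤ η m := hηmono m k (by omega) hk1
      have hkp : 0 ≤ η k := (hηpos k (by omega)).le
      nlinarith [mul_nonneg hkp hpn]
    have h1 : ∑ k ∈ Finset.Ico m (n + 1), η k ^ 2 * ∏ j ∈ Finset.Ico (k + 1) (n + 1), (1 - η j)
        ≤ η m * ∑ k ∈ Finset.Ico m (n + 1), η k * ∏ j ∈ Finset.Ico (k + 1) (n + 1), (1 - η j) := by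
      rw [Finset.mul_sum]
      exact Finset.sum_le_sum hstep
    rw [eta_prod_telescope η (by omega : m ≤ n + 1)] at h1
    have h2 : η m * (1 - ∏ j ∈ Finset.Ico m (n + 1), (1 - η j)) ≤ η m := by
      have hpn := hprodnn m (n + 1) hmn₀
      nlinarith [(hηpos m (by omega)).le]
    have h3 : η m ≤ 2 ^ α * c * ((n:ℝ) - 2) ^ (-α) := by
      rw [hη m (by omega)]
      have hn2 : (0:ℝ) < (n:ℝ) - 2 := by
        have : (4:ℝ) ≤ (n:ℝ) := by exact_mod_cast hn4
        linarith
      have hmge : ((n:ℝ) - 2) / 2 ≤ (m:ℝ) := by linarith [hmr]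
      have h4 : (m:ℝ) ^ (-α) ≤ (((n:ℝ) - 2) / 2) ^ (-α) :=
        Real.rpow_le_rpow_of_nonpos (by linarith) hmge (by linarith)
      have h5 : (((n:ℝ) - 2) / 2) ^ (-α) = ((n:ℝ) - 2) ^ (-α) * 2 ^ α := by
        rw [Real.div_rpow hn2.le (by norm_num : (0:ℝ) ≤ 2) (-α),
          Real.rpow_neg (by norm_num : (0:ℝ) ≤ 2), div_eq_mul_inv, inv_inv]
      rw [h5] at h4
      calc c * (m:ℝ) ^ (-α) ≤ c * (((n:ℝ) - 2) ^ (-α) * 2 ^ α) :=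
            mul_le_mul_of_nonneg_left h4 hc.le
        _ = 2 ^ α * c * ((n:ℝ) - 2) ^ (-α) := by ring
    linarith
  -- final assembly
  have hsplit : ∑ k ∈ Finset.Ico n₀ (n + 1), η k ^ 2 * ∏ j ∈ Finset.Ico (k + 1) (n + 1), (1 - η j)
      = (∑ k ∈ Finset.Ico n₀ m, η k ^ 2 * ∏ j ∈ Finset.Ico (k + 1) (n + 1), (1 - η j))
        + ∑ k ∈ Finset.Ico m (n + 1), η k ^ 2 * ∏ j ∈ Finset.Ico (k + 1) (n + 1), (1 - η j) :=
    (Finset.sum_Ico_consecutive _ hmn₀ (by omega)).symm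
  have hmain := unroll n (by omega)
  rw [hsplit] at hmain
  have hdivrw : τ * 2 ^ α * c / ((n:ℝ) - 2) ^ α = τ * (2 ^ α * c * ((n:ℝ) - 2) ^ (-α)) := by
    have hn2 : (0:ℝ) < (n:ℝ) - 2 := by
      have : (4:ℝ) ≤ (n:ℝ) := by exact_mod_cast hn4
      linarith
    rw [Real.rpow_neg hn2.le, div_eq_mul_inv]
    ring
  rw [hdivrw]
  have hτhead := mul_le_mul_of_nonneg_left hhead hτ.le
  have hτtail := mul_le_mul_of_nonneg_left htail hτ.le
  calc s (n + 1) ≤ (∏ j ∈ Finset.Ico n₀ (n + 1), (1 - η j)) * s n₀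
        + τ * ((∑ k ∈ Finset.Ico n₀ m, η k ^ 2 * ∏ j ∈ Finset.Ico (k + 1) (n + 1), (1 - η j))
          + ∑ k ∈ Finset.Ico m (n + 1), η k ^ 2 * ∏ j ∈ Finset.Ico (k + 1) (n + 1), (1 - η j)) := hmain
    _ ≤ s n₀ * Real.exp (c * (n₀ : ℝ) ^ β / β) * E
        + (τ * (c ^ 2 * chungPhi γ (n : ℝ) * E) + τ * (2 ^ α * c * ((n:ℝ) - 2) ^ (-α))) := by
        rw [mul_add τ]
        linarith [hbound1, hτhead, hτtail]
    _ = (τ * c ^ 2 * chungPhi γ (n : ℝ) + s n₀ * Real.exp (c * (n₀ : ℝ) ^ β / β)) * E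
        + τ * (2 ^ α * c * ((n:ℝ) - 2) ^ (-α)) := by ring
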